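/- Let $2 \le k \le t$ be integers, $n \ge 1$, and let $\widetilde{\delta} \le n$ be an integer. For $j \in [t]$ set $r(j) = n - \binom{j-1}{k-1}(n - \widetilde{\delta})$, and suppose $r(t) \ge 1$. Let $H$ be a balanced $t$-partite $k$-graph with classes $V_1, \dots, V_t$ of size $n$ and $\widetilde{\delta}_{k-1}(H) \ge \widetilde{\delta}$. Then there exist indices $j_1, \dots, j_t \in [n]$ with $j_i \ge r(i)$ for every $i \in [t]$ such that the vertices $v_{1, j_1}, \dots, v_{t, j_t}$ span a copy of $K_t^k$ in $H$, where $V_i = \{v_{i,1}, \dots, v_{i,n}\}$ is any fixed enumeration of each class. -/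

import Mathlib

open Finset
open scoped Classical

/-- A set of vertices of the `t`-partite vertex set `Fin t × Fin n` is legal if it
meets each class in at most one vertex. -/
def Legal {t n : ℕ} (S : Finset (Fin t × Fin n)) : Prop :=
  ∀ u ∈ S, ∀ v ∈ S, u.1 = v.1 → u = v

/-- `H` is a `t`-partite `k`-uniform hypergraph with classes of size `n`. -/
def IsPartiteKGraph (t n k : ℕ) (H : Finset (Finset (Fin t × Fin n))) : Prop :=
  ∀ e ∈ H, e.card = k ∧ Legal e

/-- The minimum partite codegree of `H` is at least `d`. -/
def CodegGE (t n k : ℕ) (H : Finset (Finset (Fin t × Fin n))) (d : ℝ) : Prop :=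
  ∀ T : Finset (Fin t × Fin n), T.card = k - 1 → Legal T →
    ∀ j : Fin t, (∀ v ∈ T, v.1 ≠ j) →
      d ≤ ((Finset.univ.filter (fun x : Fin n => insert (j, x) T ∈ H)).card : ℝ)

/-- `S` spans a copy of the complete `k`-graph `K_t^k` in `H` (one vertex per class). -/
def SpansClique (t n k : ℕ) (H : Finset (Finset (Fin t × Fin n)))
    (S : Finset (Fin t × Fin n)) : Prop :=
  S.card = t ∧ Legal S ∧ ∀ e ⊆ S, e.card = k → e ∈ H

/-- `M` is a perfect `K_t^k`-matching in `H`. -/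
def IsPerfectKtMatching (t n k : ℕ) (H M : Finset (Finset (Fin t × Fin n))) : Prop :=
  (∀ S ∈ M, SpansClique t n k H S) ∧
  (M : Set (Finset (Fin t × Fin n))).PairwiseDisjoint id ∧
  ∀ v : Fin t × Fin n, ∃ S ∈ M, v ∈ S

/-- `w` is a perfect fractional `K_t^k`-matching of `H`. -/
def IsPerfectFracMatching (t n k : ℕ) (H : Finset (Finset (Fin t × Fin n)))
    (w : Finset (Fin t × Fin n) → ℝ) : Prop :=
  (∀ S, 0 ≤ w S ∧ w S ≤ 1) ∧
  (∀ S, w S ≠ 0 → SpansClique t n k H S) ∧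
  (∀ v : Fin t × Fin n, ∑ S ∈ Finset.univ.filter (fun S => v ∈ S), w S ≤ 1) ∧
  ∑ S : Finset (Fin t × Fin n), w S = (n : ℝ)

lemma myCardFilterLt (N a : ℕ) (h : a ≤ N) :
    ((Finset.univ : Finset (Fin N)).filter (fun x => x.val < a)).card = a := by
  have : (Finset.univ.filter (fun x : Fin N => x.val < a)) =
      (Finset.range a).attachFin (fun m hm => lt_of_lt_of_le (Finset.mem_range.mp hm) h) := by
    ext x; simp [Finset.mem_attachFin]
  rw [this, Finset.card_attachFin, Finset.card_range]

/-- A copy of `K_t^k` with prescribed rank bounds: there is a clique using, in class `i`,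
a vertex of index (1-based) at least `r(i) = n - C(i-1, k-1)(n - δ)`. -/
theorem stmt5 (t n k δ : ℕ) (hk : 2 ≤ k) (hkt : k ≤ t) (hn : 1 ≤ n) (hδ : δ ≤ n)
    (hr : 1 ≤ (n : ℤ) - ((t - 1).choose (k - 1) : ℤ) * ((n : ℤ) - (δ : ℤ)))
    (H : Finset (Finset (Fin t × Fin n))) (hH : IsPartiteKGraph t n k H)
    (hcod : CodegGE t n k H (δ : ℝ)) :
    ∃ f : Fin t → Fin n,
      (∀ i : Fin t,
        (n : ℤ) - ((i.val).choose (k - 1) : ℤ) * ((n : ℤ) - (δ : ℤ)) ≤ ((f i : ℕ) : ℤ) + 1) ∧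
      SpansClique t n k H (Finset.univ.image (fun i : Fin t => (i, f i))) := by
  have hinj : ∀ g : Fin t → Fin n, Function.Injective (fun i : Fin t => (i, g i)) := by
    intro g a b hab
    exact congrArg Prod.fst hab
  have key : ∀ m : ℕ, m ≤ t → ∃ f : Fin t → Fin n,
      (∀ i : Fin t, i.val < m →
        n ≤ (f i).val + 1 + (i.val.choose (k-1)) * (n - δ)) ∧
      (∀ e ⊆ (Finset.univ.filter (fun i : Fin t => i.val < m)).image
          (fun i => (i, f i)), e.card = k → e ∈ H) := by
    intro m
    induction m with
    | zero =>
      intro _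
      refine ⟨fun _ => ⟨0, hn⟩, fun i hi => absurd hi (Nat.not_lt_zero _), ?_⟩
      intro e he hek
      exfalso
      have : e ⊆ ∅ := by
        intro y hy
        have := he hy
        simp at this
      have := Finset.card_le_card this
      simp [hek] at this
      omega
    | succ m ih =>
      intro hm1
      obtain ⟨f, hfb, hfe⟩ := ih (by omega)
      have hmt : m < t := hm1
      set i : Fin t := ⟨m, hmt⟩ with hi
      set S : Finset (Fin t × Fin n) :=
        (Finset.univ.filter (fun j : Fin t => j.val < m)).image (fun j => (j, f j)) with hS
      have hScard : S.card = m := by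
        rw [hS, Finset.card_image_of_injective _ (hinj f), myCardFilterLt t m (by omega)]
      have hSclass : ∀ v ∈ S, v.1 ≠ i := by
        intro v hv
        rw [hS] at hv
        simp only [Finset.mem_image, Finset.mem_filter] at hv
        obtain ⟨j, ⟨_, hj⟩, rfl⟩ := hv
        intro h
        apply absurd (congrArg Fin.val h)
        simp [hi]; omega
      have hSlegal : Legal S := by
        intro u hu v hv huv
        rw [hS] at hu hv
        simp only [Finset.mem_image, Finset.mem_filter] at hu hv
        obtain ⟨a, _, rfl⟩ := hu
        obtain ⟨b, _, rfl⟩ := hv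
        simp only at huv
        subst huv; rfl
      set c : ℕ := (m.choose (k-1)) * (n - δ) with hcdef
      have hcle : c + 1 ≤ n := by
        have h1 : m.choose (k-1) ≤ (t-1).choose (k-1) :=
          Nat.choose_le_choose _ (by omega)
        have h2 : ((n - δ : ℕ) : ℤ) = (n : ℤ) - (δ : ℤ) := by
          exact_mod_cast Int.ofNat_sub hδ
        have h3 : (c : ℤ) ≤ ((t-1).choose (k-1) : ℤ) * ((n : ℤ) - (δ : ℤ)) := by
          rw [hcdef]
          push_cast [h2]
          have : (0:ℤ) ≤ (n:ℤ) - (δ:ℤ) := by omega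
          exact mul_le_mul_of_nonneg_right (by exact_mod_cast h1) this
        omega
      set G : Finset (Fin n) :=
        Finset.univ.filter (fun x : Fin n => n ≤ x.val + 1 + c) with hG
      have hGcard : c + 1 ≤ G.card := by
        have hsplit := Finset.card_filter_add_card_filter_not
          (s := (Finset.univ : Finset (Fin n)))
          (p := fun x : Fin n => n ≤ x.val + 1 + c)
        have hneg : (Finset.univ.filter (fun x : Fin n => ¬ n ≤ x.val + 1 + c)).card
            = n - 1 - c := by
          have : (Finset.univ.filter (fun x : Fin n => ¬ n ≤ x.val + 1 + c)) =
              (Finset.univ.filter (fun x : Fin n => x.val < n - 1 - c)) := by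
            ext x; simp only [Finset.mem_filter, Finset.mem_univ, true_and]
            omega
          rw [this, myCardFilterLt n (n-1-c) (by omega)]
        have hclassical : (Finset.univ.filter (fun x : Fin n => n ≤ x.val + 1 + c)).card = G.card := by
          rw [hG]
        rw [hclassical, hneg, Finset.card_univ, Fintype.card_fin] at hsplit
        omega
      set Bad : Finset (Fin n) := (S.powersetCard (k-1)).biUnion
        (fun T => Finset.univ.filter (fun x : Fin n => insert (i, x) T ∉ H)) with hBad
      have hBadcard : Bad.card ≤ c := by
        have hb1 : Bad.card ≤ ∑ T ∈ S.powersetCard (k-1),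
            (Finset.univ.filter (fun x : Fin n => insert (i, x) T ∉ H)).card :=
          Finset.card_biUnion_le
        have hb2 : ∀ T ∈ S.powersetCard (k-1),
            (Finset.univ.filter (fun x : Fin n => insert (i, x) T ∉ H)).card ≤ n - δ := by
          intro T hT
          rw [Finset.mem_powersetCard] at hT
          obtain ⟨hTS, hTcard⟩ := hT
          have hTlegal : Legal T := fun u hu v hv => hSlegal u (hTS hu) v (hTS hv)
          have hTclass : ∀ v ∈ T, v.1 ≠ i := fun v hv => hSclass v (hTS hv)
          have hgood := hcod T hTcard hTlegal i hTclass
          have hgoodn : δ ≤ (Finset.univ.filter (fun x : Fin n => insert (i, x) T ∈ H)).card := by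
            exact_mod_cast hgood
          have hsplit := Finset.card_filter_add_card_filter_not
            (s := (Finset.univ : Finset (Fin n)))
            (p := fun x : Fin n => insert (i, x) T ∈ H)
          rw [Finset.card_univ, Fintype.card_fin] at hsplit
          omega
        calc Bad.card ≤ ∑ T ∈ S.powersetCard (k-1),
              (Finset.univ.filter (fun x : Fin n => insert (i, x) T ∉ H)).card := hb1
          _ ≤ ∑ _T ∈ S.powersetCard (k-1), (n - δ) := Finset.sum_le_sum hb2
          _ = (S.powersetCard (k-1)).card * (n - δ) := by rw [Finset.sum_const, smul_eq_mul]
          _ = c := by rw [Finset.card_powersetCard, hScard]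
      have hne : (G \ Bad).Nonempty := by
        rw [← Finset.card_pos]
        have := Finset.le_card_sdiff Bad G
        omega
      obtain ⟨x, hx⟩ := hne
      rw [Finset.mem_sdiff] at hx
      obtain ⟨hxG, hxBad⟩ := hx
      set f' : Fin t → Fin n := fun j => if j = i then x else f j with hf'
      have hf'eq : ∀ j : Fin t, j.val < m → f' j = f j := by
        intro j hj
        rw [hf']
        simp only
        rw [if_neg]
        intro h
        rw [h] at hj
        simp [hi] at hj
      have hS' : (Finset.univ.filter (fun j : Fin t => j.val < m+1)).image
          (fun j => (j, f' j)) = insert (i, x) S := by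
        have hfil : (Finset.univ.filter (fun j : Fin t => j.val < m+1)) =
            insert i (Finset.univ.filter (fun j : Fin t => j.val < m)) := by
          ext j
          simp only [Finset.mem_filter, Finset.mem_univ, true_and, Finset.mem_insert]
          constructor
          · intro h
            rcases Nat.lt_succ_iff_lt_or_eq.mp h with h | h
            · exact Or.inr h
            · exact Or.inl (Fin.ext h)
          · rintro (rfl | h)
            · simp [hi]
            · omega
        rw [hfil, Finset.image_insert]
        congr 1
        · simp [hf']
        · rw [hS]
          apply Finset.image_congr
          intro j hj
          simp only [Finset.mem_coe, Finset.mem_filter] at hj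
          show (j, f' j) = (j, f j)
          rw [hf'eq j hj.2]
      refine ⟨f', ?_, ?_⟩
      · intro j hj
        rcases Nat.lt_succ_iff_lt_or_eq.mp hj with h | h
        · rw [hf'eq j h]; exact hfb j h
        · have hji : j = i := Fin.ext h
          have hfx : f' j = x := by
            show (if j = i then x else f j) = x
            rw [if_pos hji]
          rw [hfx, h]
          rw [hG] at hxG
          simp only [Finset.mem_filter, Finset.mem_univ, true_and] at hxG
          exact hxG
      · intro e he hek
        rw [hS'] at he
        by_cases hmem : (i, x) ∈ e
        · set T : Finset (Fin t × Fin n) := e.erase (i, x) with hT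
          have hTS : T ⊆ S := by
            intro y hy
            rw [hT, Finset.mem_erase] at hy
            rcases Finset.mem_insert.mp (he hy.2) with h | h
            · exact absurd h hy.1
            · exact h
          have hTcard : T.card = k - 1 := by
            rw [hT, Finset.card_erase_of_mem hmem, hek]
          have hTP : T ∈ S.powersetCard (k-1) :=
            Finset.mem_powersetCard.mpr ⟨hTS, hTcard⟩
          have : insert (i, x) T ∈ H := by
            by_contra hcon
            exact hxBad (Finset.mem_biUnion.mpr ⟨T, hTP, by simp [hcon]⟩)
          rwa [hT, Finset.insert_erase hmem] at this
        · have heS : e ⊆ S := by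
            intro y hy
            rcases Finset.mem_insert.mp (he hy) with h | h
            · exact absurd (h ▸ hy) hmem
            · exact h
          exact hfe e heS hek
  obtain ⟨f, hfb, hfe⟩ := key t le_rfl
  have hfilt : (Finset.univ.filter (fun j : Fin t => j.val < t)) = Finset.univ := by
    apply Finset.filter_true_of_mem
    intro j _
    exact j.isLt
  refine ⟨f, ?_, ?_, ?_, ?_⟩
  · intro i
    have hb := hfb i i.isLt
    set c : ℕ := (i.val.choose (k-1)) * (n - δ) with hc
    have h2 : (c : ℤ) = (i.val.choose (k-1) : ℤ) * ((n : ℤ) - (δ : ℤ)) := by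
      rw [hc]
      push_cast [Int.ofNat_sub hδ]
      ring
    omega
  · rw [Finset.card_image_of_injective _ (hinj f), Finset.card_univ, Fintype.card_fin]
  · intro u hu v hv huv
    simp only [Finset.mem_image, Finset.mem_univ, true_and] at hu hv
    obtain ⟨a, rfl⟩ := hu
    obtain ⟨b, rfl⟩ := hv
    simp only at huv
    subst huv; rfl
  · intro e he hek
    apply hfe e _ hek
    rwa [hfilt]
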